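/- Let t₁, x₁, X₁₁ ∈ ℝ with t₁ ≥ 0, and set s₁ := 1 − x₁ − t₁, Z₁₁ := x₁ − X₁₁, and S₁₁ := 1 + X₁₁ − 2x₁ − t₁. Then the 4×4 symmetric matrix W = [[1, x₁, s₁, t₁], [x₁, X₁₁, Z₁₁, 0], [s₁, Z₁₁, S₁₁, 0], [t₁, 0, 0, t₁]] is positive semidefinite if and only if the 2×2 matrix [[1−t₁, x₁], [x₁, X₁₁]] is positive semidefinite, equivalently if and only if 1−t₁ ≥ 0, X₁₁ ≥ 0, and (1−t₁)·X₁₁ ≥ x₁². -/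

import Mathlib

open Matrix

lemma quad_nonneg (a b c u v : ℝ) (ha : 0 ≤ a) (hc : 0 ≤ c) (hd : b ^ 2 ≤ a * c) :
    0 ≤ a * u ^ 2 + 2 * b * u * v + c * v ^ 2 := by
  rcases ha.lt_or_eq with h | h
  · nlinarith [sq_nonneg (a * u + b * v), sq_nonneg v, mul_pos h h]
  · have hb : b = 0 := by nlinarith [sq_nonneg b]
    subst hb; rw [← h]; nlinarith [sq_nonneg v]

lemma two2 (a b c : ℝ) :
    (!![a, b; b, c] : Matrix (Fin 2) (Fin 2) ℝ).PosSemidef ↔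
      (a ≥ 0 ∧ c ≥ 0 ∧ a * c ≥ b ^ 2) := by
  rw [posSemidef_iff_dotProduct_mulVec]
  constructor
  · rintro ⟨_, h⟩
    have h1 := h ![1, 0]
    have h2 := h ![0, 1]
    have h4 := h ![-b, a]
    have h5 := h ![1, 1]
    have h6 := h ![1, -1]
    simp [dotProduct, Matrix.mulVec, Fin.sum_univ_two] at h1 h2 h4 h5 h6
    refine ⟨h1, h2, ?_⟩
    rcases h1.lt_or_eq with hA | hA
    · nlinarith [h4]
    · have h3 := h ![c, -b]
      simp [dotProduct, Matrix.mulVec, Fin.sum_univ_two, ← hA] at h3 h5 h6 ⊢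
      have hb : b = 0 := by
        rcases eq_or_ne b 0 with hb | hb
        · exact hb
        · exfalso
          have hb2 : 0 < b ^ 2 := by positivity
          have hcle : c ≤ 0 := by nlinarith [h3]
          have hc0 : c = 0 := le_antisymm hcle h2
          rw [hc0] at h5 h6
          exact hb (by linarith)
      simp [hb]
  · rintro ⟨ha, hc, hd⟩
    refine ⟨?_, fun x => ?_⟩
    · ext i j
      fin_cases i <;> fin_cases j <;> simp [Matrix.conjTranspose_apply]
    · have := quad_nonneg a b c (x 0) (x 1) ha hc hd
      simp [dotProduct, Matrix.mulVec, Fin.sum_univ_two]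
      nlinarith [this]

theorem stmt2 (t₁ x₁ X₁₁ : ℝ) (ht : 0 ≤ t₁) :
    ((!![1, x₁, 1 - x₁ - t₁, t₁;
         x₁, X₁₁, x₁ - X₁₁, 0;
         1 - x₁ - t₁, x₁ - X₁₁, 1 + X₁₁ - 2 * x₁ - t₁, 0;
         t₁, 0, 0, t₁] : Matrix (Fin 4) (Fin 4) ℝ).PosSemidef ↔
      (!![1 - t₁, x₁; x₁, X₁₁] : Matrix (Fin 2) (Fin 2) ℝ).PosSemidef) ∧
    ((!![1 - t₁, x₁; x₁, X₁₁] : Matrix (Fin 2) (Fin 2) ℝ).PosSemidef ↔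
      (1 - t₁ ≥ 0 ∧ X₁₁ ≥ 0 ∧ (1 - t₁) * X₁₁ ≥ x₁ ^ 2)) := by
  refine ⟨?_, two2 _ _ _⟩
  rw [posSemidef_iff_dotProduct_mulVec, posSemidef_iff_dotProduct_mulVec]
  constructor
  · rintro ⟨_, h⟩
    refine ⟨?_, fun y => ?_⟩
    · ext i j
      fin_cases i <;> fin_cases j <;> simp [Matrix.conjTranspose_apply]
    · have hx := h ![y 0, y 1, 0, -(y 0)]
      simp [dotProduct, Matrix.mulVec, Fin.sum_univ_two, Fin.sum_univ_four] at hx ⊢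
      nlinarith [hx]
  · intro h2
    obtain ⟨ha, hc, hd⟩ := (two2 _ _ _).mp (posSemidef_iff_dotProduct_mulVec.mpr h2)
    refine ⟨?_, fun x => ?_⟩
    · ext i j
      fin_cases i <;> fin_cases j <;> simp [Matrix.conjTranspose_apply]
    · have hq := quad_nonneg (1 - t₁) x₁ X₁₁ (x 0 + x 2) (x 1 - x 2) ha hc hd
      have hp := mul_nonneg ht (sq_nonneg (x 0 + x 3))
      simp [dotProduct, Matrix.mulVec, Fin.sum_univ_four]
      nlinarith [hq, hp]
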